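/- arXiv:2405.19761 — 2 statements merged into one kernel-verified Lean document; each statement's English description precedes it below -/
import Mathlib

section
/- Let X and Y be finite sequences of points in R^2 with discrete Fréchet distance d_F(X,Y) = d_xy. Let C be a 1D convolution with a 2×3 kernel k (stride 1, padding 1 with zeros), producing scalar sequences C(X) and C(Y) of the same lengths as X and Y. Let S_0 = k_{0,0}+k_{0,1}+k_{0,2} and S_1 = k_{1,0}+k_{1,1}+k_{1,2}, and let Δ be the maximum over all index pairs (i,j) of |Σ_{m=0}^{1} k_{m,0}(δ^y_{m,j} − δ^x_{m,i}) + k_{m,2}(δ^x_{m,i+1} − δ^y_{m,j+1})|, where δ^x_{m,i} = x_{m,i} − x_{m,i−1} is the coordinate-wise forward difference (with boundary differences taken against the zero padding). Then d_F(C(X), C(Y)) ≤ sqrt(S_0^2 + S_1^2) · d_xy + Δ. -/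
open scoped BigOperators

instance finNonempty {n : ℕ} [NeZero n] : Nonempty (Fin n) :=
  ⟨⟨0, Nat.pos_of_ne_zero (NeZero.ne n)⟩⟩

instance neZeroMulNat {a b : ℕ} [NeZero a] [NeZero b] : NeZero (a * b) :=
  ⟨Nat.mul_ne_zero (NeZero.ne a) (NeZero.ne b)⟩

/-- The last index of `Fin n`. -/
def lastIdx (n : ℕ) [NeZero n] : Fin n :=
  ⟨n - 1, by have := Nat.pos_of_ne_zero (NeZero.ne n); omega⟩

/-- A monotone coupling between the index sets of two finite sequences:
it starts at the pair of first indices, ends at the pair of last indices,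
and each index advances by at most one per step. -/
def IsCoupling {M N : ℕ} [NeZero M] [NeZero N] (L : List (Fin M × Fin N)) : Prop :=
  L.head? = some (0, 0) ∧
  L.getLast? = some (lastIdx M, lastIdx N) ∧
  L.Chain' fun p q =>
    (q.1.val = p.1.val ∨ q.1.val = p.1.val + 1) ∧
    (q.2.val = p.2.val ∨ q.2.val = p.2.val + 1)

/-- The maximum matched distance of a coupling. -/
noncomputable def couplingCost {α : Type*} [PseudoMetricSpace α] {M N : ℕ}
    (x : Fin M → α) (y : Fin N → α) (L : List (Fin M × Fin N)) : ℝ :=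
  (L.map fun p => dist (x p.1) (y p.2)).foldr max 0

/-- The discrete Fréchet distance between two finite sequences. -/
noncomputable def dFrechet {α : Type*} [PseudoMetricSpace α] {M N : ℕ} [NeZero M] [NeZero N]
    (x : Fin M → α) (y : Fin N → α) : ℝ :=
  sInf {r | ∃ L, IsCoupling L ∧ couplingCost x y L = r}

abbrev E2 := EuclideanSpace ℝ (Fin 2)

/-- The trajectory `X` (a `2 × M` matrix) extended by zero padding, coordinate `m`, position `t`. -/
noncomputable def padded {M : ℕ} (X : Fin M → E2) (m : Fin 2) (t : ℤ) : ℝ :=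
  if h : 0 ≤ t ∧ t < (M : ℤ) then X ⟨t.toNat, by omega⟩ m else 0

/-- 1D convolution of a trajectory with a `2 × 3` kernel, stride 1, zero padding 1. -/
noncomputable def conv1 {M : ℕ} (k : Fin 2 → Fin 3 → ℝ) (X : Fin M → E2) : Fin M → ℝ :=
  fun j => ∑ m : Fin 2,
    (k m 0 * padded X m ((j.val : ℤ) - 1) + k m 1 * padded X m (j.val : ℤ) +
      k m 2 * padded X m ((j.val : ℤ) + 1))

/-- Coordinate-wise forward difference `δ^x_{m,i} = x_{m,i} - x_{m,i-1}`,
with boundary differences taken against the zero padding. -/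
noncomputable def deltaP {M : ℕ} (X : Fin M → E2) (m : Fin 2) (i : ℤ) : ℝ :=
  padded X m i - padded X m (i - 1)

lemma foldr_max_nonneg (l : List ℝ) : 0 ≤ l.foldr max 0 := by
  induction l with
  | nil => simp
  | cons a l ih => exact le_trans ih (le_max_right _ _)

lemma foldr_max_le {α : Type*} (L : List α) (f g : α → ℝ) (a Δ : ℝ)
    (ha : 0 ≤ a) (hΔ : 0 ≤ Δ) (h : ∀ p ∈ L, f p ≤ a * g p + Δ) :
    (L.map f).foldr max 0 ≤ a * ((L.map g).foldr max 0) + Δ := by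
  induction L with
  | nil => simpa using hΔ
  | cons p l ih =>
    simp only [List.map_cons, List.foldr_cons]
    have h1 : f p ≤ a * max (g p) ((l.map g).foldr max 0) + Δ := by
      calc f p ≤ a * g p + Δ := h p (by simp)
        _ ≤ _ := by
          have := mul_le_mul_of_nonneg_left (le_max_left (g p) ((l.map g).foldr max 0)) ha
          linarith
    have h2 : (l.map f).foldr max 0 ≤ a * max (g p) ((l.map g).foldr max 0) + Δ := by
      calc (l.map f).foldr max 0 ≤ a * ((l.map g).foldr max 0) + Δ :=
            ih (fun q hq => h q (by simp [hq]))
        _ ≤ _ := by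
          have := mul_le_mul_of_nonneg_left (le_max_right (g p) ((l.map g).foldr max 0)) ha
          linarith
    exact max_le h1 h2

lemma exists_coupling (M N : ℕ) [NeZero M] [NeZero N] :
    ∃ L : List (Fin M × Fin N), IsCoupling L := by
  have hM := Nat.pos_of_ne_zero (NeZero.ne M)
  have hN := Nat.pos_of_ne_zero (NeZero.ne N)
  obtain ⟨n', hn'⟩ : ∃ n', max M N = n' + 1 := ⟨max M N - 1, by omega⟩
  have hM1 : M - 1 ≤ n' := by omega
  have hN1 : N - 1 ≤ n' := by omega
  refine ⟨(List.range (max M N)).map fun t =>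
    (⟨min t (M - 1), by omega⟩, ⟨min t (N - 1), by omega⟩), ?_, ?_, ?_⟩
  · rw [hn', List.range_succ_eq_map]
    simp only [List.map_cons, List.head?_cons]
    congr 2 <;> ext <;> simp
  · rw [hn', List.range_succ, List.map_append]
    simp only [List.map_cons, List.map_nil, List.getLast?_concat]
    congr 2 <;> ext <;> simp [lastIdx] <;> omega
  · rw [hn']
    change List.IsChain _ _
    rw [List.isChain_map, List.isChain_range_succ]
    intro m hm
    constructor <;> simp <;> omega

lemma padded_coe {M : ℕ} (X : Fin M → E2) (m : Fin 2) (i : Fin M) :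
    padded X m (i.val : ℤ) = X i m := by
  have h : (0:ℤ) ≤ (i.val : ℤ) ∧ (i.val : ℤ) < (M : ℤ) :=
    ⟨Int.natCast_nonneg _, by exact_mod_cast i.isLt⟩
  rw [padded, dif_pos h]
  exact congrArg (fun v => X v m) (Fin.ext (by simp))

lemma cauchy2 (S0 S1 u0 u1 : ℝ) :
    |S0 * u0 + S1 * u1| ≤ Real.sqrt (S0 ^ 2 + S1 ^ 2) * Real.sqrt (u0 ^ 2 + u1 ^ 2) := by
  have hsq : (S0 * u0 + S1 * u1) ^ 2 ≤ (S0 ^ 2 + S1 ^ 2) * (u0 ^ 2 + u1 ^ 2) := by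
    nlinarith [sq_nonneg (S0 * u1 - S1 * u0)]
  calc |S0 * u0 + S1 * u1| = Real.sqrt ((S0 * u0 + S1 * u1) ^ 2) :=
        (Real.sqrt_sq_eq_abs _).symm
    _ ≤ Real.sqrt ((S0 ^ 2 + S1 ^ 2) * (u0 ^ 2 + u1 ^ 2)) := Real.sqrt_le_sqrt hsq
    _ = _ := Real.sqrt_mul (by positivity) _

lemma pointwise_bound {M N : ℕ} (X : Fin M → E2) (Y : Fin N → E2)
    (k : Fin 2 → Fin 3 → ℝ) (i : Fin M) (j : Fin N) :
    dist (conv1 k X i) (conv1 k Y j) ≤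
      Real.sqrt ((k 0 0 + k 0 1 + k 0 2) ^ 2 + (k 1 0 + k 1 1 + k 1 2) ^ 2) *
        dist (X i) (Y j) +
      |∑ m : Fin 2, (k m 0 * (deltaP Y m (j.val : ℤ) - deltaP X m (i.val : ℤ)) +
        k m 2 * (deltaP X m ((i.val : ℤ) + 1) - deltaP Y m ((j.val : ℤ) + 1)))| := by
  have key : conv1 k X i - conv1 k Y j =
      ((k 0 0 + k 0 1 + k 0 2) * (X i 0 - Y j 0) +
        (k 1 0 + k 1 1 + k 1 2) * (X i 1 - Y j 1)) +
      ∑ m : Fin 2, (k m 0 * (deltaP Y m (j.val : ℤ) - deltaP X m (i.val : ℤ)) +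
        k m 2 * (deltaP X m ((i.val : ℤ) + 1) - deltaP Y m ((j.val : ℤ) + 1))) := by
    simp only [conv1, deltaP, Fin.sum_univ_two, add_sub_cancel_right, padded_coe]
    ring
  have hdistE : dist (X i) (Y j) =
      Real.sqrt ((X i 0 - Y j 0) ^ 2 + (X i 1 - Y j 1) ^ 2) := by
    rw [EuclideanSpace.dist_eq, Fin.sum_univ_two]
    simp [Real.dist_eq, sq_abs]
  rw [Real.dist_eq, key, hdistE]
  refine le_trans (abs_add_le _ _) ?_
  exact add_le_add_left (cauchy2 _ _ _ _) _

theorem conv1d_upper_bound {M N : ℕ} [NeZero M] [NeZero N]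
    (X : Fin M → E2) (Y : Fin N → E2) (k : Fin 2 → Fin 3 → ℝ)
    (dxy S0 S1 Δ : ℝ)
    (hd : dFrechet X Y = dxy)
    (hS0 : S0 = k 0 0 + k 0 1 + k 0 2)
    (hS1 : S1 = k 1 0 + k 1 1 + k 1 2)
    (hΔ : Δ = (Finset.univ : Finset (Fin M × Fin N)).sup' Finset.univ_nonempty fun p =>
      |∑ m : Fin 2, (k m 0 * (deltaP Y m (p.2.val : ℤ) - deltaP X m (p.1.val : ℤ)) +
        k m 2 * (deltaP X m ((p.1.val : ℤ) + 1) - deltaP Y m ((p.2.val : ℤ) + 1)))|) :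
    dFrechet (conv1 k X) (conv1 k Y) ≤ Real.sqrt (S0 ^ 2 + S1 ^ 2) * dxy + Δ := by
  subst hd hS0 hS1 hΔ
  set a := Real.sqrt ((k 0 0 + k 0 1 + k 0 2) ^ 2 + (k 1 0 + k 1 1 + k 1 2) ^ 2) with haa
  set Δ := (Finset.univ : Finset (Fin M × Fin N)).sup' Finset.univ_nonempty fun p =>
      |∑ m : Fin 2, (k m 0 * (deltaP Y m (p.2.val : ℤ) - deltaP X m (p.1.val : ℤ)) +
        k m 2 * (deltaP X m ((p.1.val : ℤ) + 1) - deltaP Y m ((p.2.val : ℤ) + 1)))| with hΔd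
  have ha : 0 ≤ a := Real.sqrt_nonneg _
  have hΔ0 : 0 ≤ Δ := by
    rw [hΔd]
    have := Finset.le_sup' (fun p : Fin M × Fin N =>
      |∑ m : Fin 2, (k m 0 * (deltaP Y m (p.2.val : ℤ) - deltaP X m (p.1.val : ℤ)) +
        k m 2 * (deltaP X m ((p.1.val : ℤ) + 1) - deltaP Y m ((p.2.val : ℤ) + 1)))|)
      (Finset.mem_univ ((0, 0) : Fin M × Fin N))
    exact le_trans (abs_nonneg _) this
  have hpoint : ∀ (i : Fin M) (j : Fin N),
      dist (conv1 k X i) (conv1 k Y j) ≤ a * dist (X i) (Y j) + Δ := by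
    intro i j
    refine le_trans (pointwise_bound X Y k i j) (add_le_add_right ?_ _)
    rw [hΔd]
    exact Finset.le_sup' (fun p : Fin M × Fin N =>
      |∑ m : Fin 2, (k m 0 * (deltaP Y m (p.2.val : ℤ) - deltaP X m (p.1.val : ℤ)) +
        k m 2 * (deltaP X m ((p.1.val : ℤ) + 1) - deltaP Y m ((p.2.val : ℤ) + 1)))|)
      (Finset.mem_univ ((i, j) : Fin M × Fin N))
  have hne : {r | ∃ L, IsCoupling L ∧ couplingCost X Y L = r}.Nonempty := by
    obtain ⟨L, hL⟩ := exists_coupling M N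
    exact ⟨couplingCost X Y L, L, hL, rfl⟩
  have hbddc : BddBelow {r | ∃ L, IsCoupling L ∧ couplingCost (conv1 k X) (conv1 k Y) L = r} := by
    refine ⟨0, ?_⟩
    rintro r ⟨L, -, rfl⟩
    exact foldr_max_nonneg _
  have hconv_le : ∀ r ∈ {r | ∃ L, IsCoupling L ∧ couplingCost X Y L = r},
      dFrechet (conv1 k X) (conv1 k Y) ≤ a * r + Δ := by
    rintro r ⟨L, hL, rfl⟩
    have h1 : dFrechet (conv1 k X) (conv1 k Y) ≤ couplingCost (conv1 k X) (conv1 k Y) L :=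
      csInf_le hbddc ⟨L, hL, rfl⟩
    refine h1.trans ?_
    simp only [couplingCost]
    exact foldr_max_le L _ _ a Δ ha hΔ0 fun p _ => hpoint p.1 p.2
  have hXY : dFrechet X Y = sInf {r | ∃ L, IsCoupling L ∧ couplingCost X Y L = r} := rfl
  refine le_of_forall_pos_le_add ?_
  intro ε hε
  have hε' : (0:ℝ) < ε / (a + 1) := by positivity
  obtain ⟨r, hr, hrlt⟩ := Real.lt_sInf_add_pos hne hε'
  have h2 := hconv_le r hr
  have h3 : a * r ≤ a * (sInf {r | ∃ L, IsCoupling L ∧ couplingCost X Y L = r} + ε / (a + 1)) :=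
    mul_le_mul_of_nonneg_left hrlt.le ha
  have h4 : a * (ε / (a + 1)) ≤ ε := by
    rw [mul_comm, div_mul_eq_mul_div, div_le_iff₀ (by positivity)]
    nlinarith
  have h5 := mul_add a (sInf {r | ∃ L, IsCoupling L ∧ couplingCost X Y L = r}) (ε / (a + 1))
  rw [hXY]
  linarith
end

section
/- Let X = [x_1, ..., x_M] be a sequence of vectors in R^l with M divisible by k, and P the coordinate-wise max-pooling with window size k and stride k. For each block i (1 ≤ i ≤ M/k), let X_i^↑ ∈ R^l be the coordinate-wise maximum over the block and X_i^↓ ∈ R^l the coordinate-wise minimum. Then d_F(X, P(X)) ≤ max_{1 ≤ i ≤ M/k} ||X_i^↓ − X_i^↑||_2. -/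
open scoped BigOperators

/-- The global index of the `t`-th element of the `i`-th pooling block. -/
def blockIdx {a k : ℕ} (i : Fin a) (t : Fin k) : Fin (a * k) :=
  ⟨i.val * k + t.val, by
    have h1 := t.isLt
    have h2 : i.val + 1 ≤ a := i.isLt
    calc i.val * k + t.val < i.val * k + k := by omega
      _ = (i.val + 1) * k := by ring
      _ ≤ a * k := Nat.mul_le_mul_right k h2⟩

/-- Coordinate-wise 1D max-pooling with window size `k` and stride `k`. -/
noncomputable def pool {l a k : ℕ} [NeZero k] (X : Fin (a * k) → EuclideanSpace ℝ (Fin l)) :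
    Fin a → EuclideanSpace ℝ (Fin l) :=
  fun i => (WithLp.equiv 2 (Fin l → ℝ)).symm fun j =>
    Finset.univ.sup' Finset.univ_nonempty fun t : Fin k => X (blockIdx i t) j

/-- The coordinate-wise minimum vector of the `i`-th pooling block. -/
noncomputable def blockMin {l a k : ℕ} [NeZero k] (X : Fin (a * k) → EuclideanSpace ℝ (Fin l)) :
    Fin a → EuclideanSpace ℝ (Fin l) :=
  fun i => (WithLp.equiv 2 (Fin l → ℝ)).symm fun j =>
    Finset.univ.inf' Finset.univ_nonempty fun t : Fin k => X (blockIdx i t) j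


section Aux

lemma foldr_max_nonneg_s5 (L : List ℝ) : 0 ≤ L.foldr max 0 := by
  induction L with
  | nil => simp
  | cons h t ih => exact le_max_of_le_right ih

lemma foldr_max_le_s5 {B : ℝ} (hB : 0 ≤ B) (L : List ℝ) (h : ∀ x ∈ L, x ≤ B) :
    L.foldr max 0 ≤ B := by
  induction L with
  | nil => simpa
  | cons x t ih =>
    simp only [List.foldr_cons, max_le_iff]
    exact ⟨h x (List.mem_cons_self), ih fun y hy => h y (List.mem_cons_of_mem _ hy)⟩

lemma dist_le_key {l a k : ℕ} [NeZero k] (X : Fin (a * k) → EuclideanSpace ℝ (Fin l))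
    (i : Fin a) (t : Fin k) :
    dist (X (blockIdx i t)) (pool X i) ≤ ‖blockMin X i - pool X i‖ := by
  rw [EuclideanSpace.dist_eq, EuclideanSpace.norm_eq]
  apply Real.sqrt_le_sqrt
  apply Finset.sum_le_sum
  intro j _
  have h1 : X (blockIdx i t) j ≤ pool X i j :=
    Finset.le_sup' (fun t : Fin k => X (blockIdx i t) j) (Finset.mem_univ t)
  have h2 : blockMin X i j ≤ X (blockIdx i t) j :=
    Finset.inf'_le (fun t : Fin k => X (blockIdx i t) j) (Finset.mem_univ t)
  have hsub : (blockMin X i - pool X i) j = blockMin X i j - pool X i j := rfl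
  rw [Real.dist_eq, Real.norm_eq_abs, hsub, sq_abs, sq_abs]
  nlinarith [h1, h2]

/-- Block index of a global index. -/
def blockOf {a k : ℕ} [NeZero k] (g : Fin (a * k)) : Fin a :=
  ⟨g.val / k, Nat.div_lt_of_lt_mul (show g.val < k * a by rw [Nat.mul_comm k a]; exact g.isLt)⟩

/-- The canonical coupling matching each global index `g` to its block `g / k`. -/
def theCoupling (a k : ℕ) [NeZero a] [NeZero k] : List (Fin (a * k) × Fin a) :=
  (List.finRange (a * k)).map fun g => (g, blockOf g)

lemma theCoupling_length (a k : ℕ) [NeZero a] [NeZero k] :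
    (theCoupling a k).length = a * k := by simp [theCoupling]

lemma theCoupling_getElem (a k : ℕ) [NeZero a] [NeZero k] (n : ℕ)
    (hn : n < (theCoupling a k).length) :
    (theCoupling a k)[n] =
      ((⟨n, by rwa [theCoupling_length] at hn⟩ : Fin (a * k)),
        blockOf (⟨n, by rwa [theCoupling_length] at hn⟩ : Fin (a * k))) := by
  simp [theCoupling]

lemma last_div (a k : ℕ) [NeZero a] [NeZero k] : (a * k - 1) / k = a - 1 := by
  have hk : 0 < k := Nat.pos_of_ne_zero (NeZero.ne k)
  have ha : 0 < a := Nat.pos_of_ne_zero (NeZero.ne a)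
  have hsub : (a - 1) * k = a * k - k := by rw [Nat.sub_mul, Nat.one_mul]
  have hle : k ≤ a * k := Nat.le_mul_of_pos_left k ha
  have heq : a * k - 1 = (k - 1) + (a - 1) * k := by omega
  rw [heq, Nat.add_mul_div_right _ _ hk, Nat.div_eq_of_lt (by omega)]
  omega

lemma theCoupling_isCoupling (a k : ℕ) [NeZero a] [NeZero k] :
    IsCoupling (theCoupling a k) := by
  have hk : 0 < k := Nat.pos_of_ne_zero (NeZero.ne k)
  have ha : 0 < a := Nat.pos_of_ne_zero (NeZero.ne a)
  have hak : 0 < a * k := Nat.mul_pos ha hk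
  have hne : theCoupling a k ≠ [] := by
    intro h
    have := theCoupling_length a k
    rw [h] at this
    simp at this
    omega
  refine ⟨?_, ?_, ?_⟩
  · rw [List.head?_eq_head hne, List.head_eq_getElem, theCoupling_getElem]
    refine congrArg some (Prod.ext (Fin.ext rfl) (Fin.ext ?_))
    exact Nat.zero_div k
  · rw [List.getLast?_eq_getLast hne, List.getLast_eq_getElem, theCoupling_getElem]
    refine congrArg some (Prod.ext (Fin.ext ?_) (Fin.ext ?_))
    · simp [theCoupling_length, lastIdx]
    · show ((theCoupling a k).length - 1) / k = (lastIdx a).val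
      rw [theCoupling_length]
      exact (last_div a k).trans rfl
  · rw [List.Chain', List.isChain_iff_getElem]
    intro n hn
    rw [theCoupling_getElem, theCoupling_getElem]
    constructor
    · right; rfl
    · show (n + 1) / k = n / k ∨ (n + 1) / k = n / k + 1
      have h1 : n / k ≤ (n + 1) / k := Nat.div_le_div_right (Nat.le_succ n)
      have h2 : (n + 1) / k ≤ n / k + 1 := by
        calc (n + 1) / k ≤ (n + k) / k := Nat.div_le_div_right (by omega)
          _ = n / k + 1 := Nat.add_div_right n hk
      omega

end Aux

theorem dFrechet_to_pool_bound {l a k : ℕ} [NeZero a] [NeZero k]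
    (X : Fin (a * k) → EuclideanSpace ℝ (Fin l)) :
    dFrechet X (pool X)
      ≤ Finset.univ.sup' Finset.univ_nonempty fun i : Fin a => ‖blockMin X i - pool X i‖ := by
  have hk : 0 < k := Nat.pos_of_ne_zero (NeZero.ne k)
  set B := Finset.univ.sup' Finset.univ_nonempty fun i : Fin a => ‖blockMin X i - pool X i‖
    with hB
  have hB0 : 0 ≤ B := by
    obtain ⟨i⟩ := (inferInstance : Nonempty (Fin a))
    calc (0 : ℝ) ≤ ‖blockMin X i - pool X i‖ := norm_nonneg _
      _ ≤ B := by
        rw [hB]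
        exact Finset.le_sup' (fun i : Fin a => ‖blockMin X i - pool X i‖) (Finset.mem_univ i)
  have hmem : couplingCost X (pool X) (theCoupling a k) ∈
      {r | ∃ L, IsCoupling L ∧ couplingCost X (pool X) L = r} :=
    ⟨theCoupling a k, theCoupling_isCoupling a k, rfl⟩
  have hbdd : BddBelow {r | ∃ L, IsCoupling L ∧ couplingCost X (pool X) L = r} := by
    refine ⟨0, fun r hr => ?_⟩
    obtain ⟨L, _, hL⟩ := hr
    rw [← hL]
    exact foldr_max_nonneg_s5 _
  refine le_trans (csInf_le hbdd hmem) ?_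
  unfold couplingCost
  apply foldr_max_le_s5 hB0
  intro x hx
  simp only [List.mem_map] at hx
  obtain ⟨p, hp, rfl⟩ := hx
  simp only [theCoupling, List.mem_map, List.mem_finRange] at hp
  obtain ⟨g, -, rfl⟩ := hp
  have hidx : g = blockIdx (blockOf g) (⟨g.val % k, Nat.mod_lt _ hk⟩ : Fin k) :=
    Fin.ext (Nat.div_add_mod' g.val k).symm
  calc dist (X g) (pool X (blockOf g))
      = dist (X (blockIdx (blockOf g) ⟨g.val % k, Nat.mod_lt _ hk⟩)) (pool X (blockOf g)) := by
        rw [← hidx]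
    _ ≤ ‖blockMin X (blockOf g) - pool X (blockOf g)‖ := dist_le_key X _ _
    _ ≤ B := by
        rw [hB]
        exact Finset.le_sup' (fun i : Fin a => ‖blockMin X i - pool X i‖) (Finset.mem_univ _)
end
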